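/- Each projective representation τ_i of D_{2n} (n even) defined by τ_i(aᵏbˡ) = A_iᵏB_iˡ with A_i = diag(εⁱ, ε^{1−i}), B_i = [[0,1],[1,0]], is irreducible, and τ_i is not linearly equivalent to τ_j for i ≠ j, i,j ∈ {1,…,n/2}. -/

import Mathlib

/-- The projective representation `τ_i` of `D_{2n}`: `τ_i(aᵏbˡ) = A_iᵏ B_iˡ`,
where `A_i = diag(εⁱ, ε^{1-i})` and `B_i = [[0,1],[1,0]]`
(`a = r 1`, `b = sr 0`, `aᵏ = r k`, `aᵏb = sr (-k)`). -/
noncomputable def dihedralRep (n : ℕ) [NeZero n] (ε : ℂ) (i : ℕ) :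
    DihedralGroup n → Matrix (Fin 2) (Fin 2) ℂ
  | DihedralGroup.r k =>
      (Matrix.diagonal ![ε ^ (i : ℤ), ε ^ (1 - (i : ℤ))]) ^ k.val
  | DihedralGroup.sr m =>
      (Matrix.diagonal ![ε ^ (i : ℤ), ε ^ (1 - (i : ℤ))]) ^ (-m : ZMod n).val *
        !![0, 1; 1, 0]

/-- Each `τ_i` is irreducible, and `τ_i`, `τ_j` are not linearly equivalent
for `i ≠ j`, `i, j ∈ {1, …, n/2}`. -/
theorem stmt16 (n : ℕ) [NeZero n] (hn2 : 2 ≤ n) (hn : Even n)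
    (ε : ℂ) (hε : IsPrimitiveRoot ε n)
    (i : ℕ) (hi1 : 1 ≤ i) (hi2 : i ≤ n / 2) :
    (∀ W : Submodule ℂ (Fin 2 → ℂ),
      (∀ g : DihedralGroup n, W.map (Matrix.toLin' (dihedralRep n ε i g)) ≤ W) →
      W = ⊥ ∨ W = ⊤) ∧
    (∀ j : ℕ, 1 ≤ j → j ≤ n / 2 → i ≠ j →
      ¬ ∃ f : Matrix (Fin 2) (Fin 2) ℂ, IsUnit f ∧
        ∀ g : DihedralGroup n,
          dihedralRep n ε j g * f = f * dihedralRep n ε i g) := by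
  haveI : Fact (1 < n) := ⟨hn2⟩
  obtain ⟨nhalf, hnhalf⟩ := hn
  have hε0 : ε ≠ 0 := hε.ne_zero (NeZero.ne n)
  have hpow : ∀ m : ℤ, 0 < m → m < (n : ℤ) → ε ^ m ≠ 1 := by
    intro m hm1 hm2 h
    have hd := (hε.zpow_eq_one_iff_dvd m).mp h
    have := Int.le_of_dvd hm1 hd
    omega
  have hne : ∀ a b : ℤ, b < a → a - b < (n : ℤ) → ε ^ a ≠ ε ^ b := by
    intro a b h1 h2 h
    apply hpow (a - b) (by omega) h2
    rw [zpow_sub₀ hε0, h, div_self (zpow_ne_zero _ hε0)]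
  have hne' : ∀ a b : ℤ, a ≠ b → a - b < (n : ℤ) → b - a < (n : ℤ) → ε ^ a ≠ ε ^ b := by
    intro a b h h1 h2
    rcases h.lt_or_gt with h' | h'
    · exact (hne b a h' h2).symm
    · exact hne a b h' h1
  have hAdef : ∀ m : ℕ, dihedralRep n ε m (DihedralGroup.r 1)
      = Matrix.diagonal ![ε ^ (m : ℤ), ε ^ (1 - (m : ℤ))] := by
    intro m
    show (Matrix.diagonal ![ε ^ (m : ℤ), ε ^ (1 - (m : ℤ))]) ^ (1 : ZMod n).val = _
    rw [ZMod.val_one, pow_one]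
  have hBdef : dihedralRep n ε i (DihedralGroup.sr 0) = !![0, 1; 1, 0] := by
    show (Matrix.diagonal ![ε ^ (i : ℤ), ε ^ (1 - (i : ℤ))]) ^ (-(0 : ZMod n)).val * _ = _
    simp
  have hBvec : ∀ u : Fin 2 → ℂ, (!![(0:ℂ), 1; 1, 0]).mulVec u = ![u 1, u 0] := by
    intro u
    funext k
    fin_cases k <;> simp [Matrix.mulVec, dotProduct, Fin.sum_univ_two, Matrix.vecHead, Matrix.vecTail]
  have hAvec : ∀ u : Fin 2 → ℂ,
      (Matrix.diagonal ![ε ^ (i : ℤ), ε ^ (1 - (i : ℤ))]).mulVec u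
        = ![ε ^ (i : ℤ) * u 0, ε ^ (1 - (i : ℤ)) * u 1] := by
    intro u
    funext k
    fin_cases k <;> simp [Matrix.mulVec_diagonal]
  constructor
  · intro W hW
    rcases eq_or_ne W ⊥ with h | h
    · exact Or.inl h
    right
    obtain ⟨v, hv, hv0⟩ := Submodule.exists_mem_ne_zero_of_ne_bot h
    have hWA : ∀ u ∈ W,
        (Matrix.diagonal ![ε ^ (i : ℤ), ε ^ (1 - (i : ℤ))]).mulVec u ∈ W := by
      intro u hu
      have := hW (DihedralGroup.r 1) (Submodule.mem_map_of_mem hu)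
      rwa [hAdef, Matrix.toLin'_apply] at this
    have hWB : ∀ u ∈ W, (!![(0:ℂ), 1; 1, 0]).mulVec u ∈ W := by
      intro u hu
      have := hW (DihedralGroup.sr 0) (Submodule.mem_map_of_mem hu)
      rwa [hBdef, Matrix.toLin'_apply] at this
    have hεi : ε ^ (1 - (i : ℤ)) ≠ ε ^ (i : ℤ) :=
      hne' _ _ (by omega) (by omega) (by omega)
    have key : ∀ u ∈ W, u 0 ≠ 0 → (![1, 0] : Fin 2 → ℂ) ∈ W := by
      intro u hu hu0
      have h1 : ε ^ (1 - (i : ℤ)) • u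
          - (Matrix.diagonal ![ε ^ (i : ℤ), ε ^ (1 - (i : ℤ))]).mulVec u ∈ W :=
        W.sub_mem (W.smul_mem _ hu) (hWA u hu)
      have hc : (ε ^ (1 - (i : ℤ)) - ε ^ (i : ℤ)) * u 0 ≠ 0 :=
        mul_ne_zero (sub_ne_zero.mpr hεi) hu0
      have h2 : ((ε ^ (1 - (i : ℤ)) - ε ^ (i : ℤ)) * u 0)⁻¹
          • (ε ^ (1 - (i : ℤ)) • u
            - (Matrix.diagonal ![ε ^ (i : ℤ), ε ^ (1 - (i : ℤ))]).mulVec u)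
          = (![1, 0] : Fin 2 → ℂ) := by
        rw [hAvec]
        funext k
        fin_cases k
        · simp only [Fin.zero_eta, Pi.smul_apply, Pi.sub_apply, smul_eq_mul,
            Matrix.cons_val_zero]
          rw [inv_mul_eq_div, div_eq_one_iff_eq hc]
          ring
        · simp only [Fin.mk_one, Pi.smul_apply, Pi.sub_apply, smul_eq_mul,
            Matrix.cons_val_one, Matrix.head_cons, Matrix.cons_val_zero]
          ring
      exact h2 ▸ W.smul_mem _ h1
    have he0 : (![1, 0] : Fin 2 → ℂ) ∈ W := by
      by_cases h0 : v 0 = 0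
      · have h1 : v 1 ≠ 0 := by
          intro h1
          apply hv0
          funext k
          fin_cases k <;> simp [h0, h1]
        have hBv := hWB v hv
        rw [hBvec] at hBv
        exact key _ hBv (by simpa using h1)
      · exact key v hv h0
    have he1 : (![0, 1] : Fin 2 → ℂ) ∈ W := by
      have hBv := hWB _ he0
      rw [hBvec] at hBv
      simpa using hBv
    rw [eq_top_iff]
    intro u _
    have hu : u = u 0 • (![1, 0] : Fin 2 → ℂ) + u 1 • ![0, 1] := by
      funext k
      fin_cases k <;> simp
    rw [hu]
    exact W.add_mem (W.smul_mem _ he0) (W.smul_mem _ he1)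
  · rintro j hj1 hj2 hij ⟨f, hf, hcomm⟩
    have cancel : ∀ a b x : ℂ, a ≠ b → a * x = x * b → x = 0 := by
      intro a b x hab h
      have h0 : x * (a - b) = 0 := by linear_combination h
      rcases mul_eq_zero.mp h0 with h' | h'
      · exact h'
      · exact absurd (sub_eq_zero.mp h') hab
    have h1 := hcomm (DihedralGroup.r 1)
    rw [hAdef i, hAdef j] at h1
    have hent : ∀ k l : Fin 2,
        (![ε ^ (j : ℤ), ε ^ (1 - (j : ℤ))] k) * f k l
          = f k l * (![ε ^ (i : ℤ), ε ^ (1 - (i : ℤ))] l) := by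
      intro k l
      have := congrFun (congrFun h1 k) l
      rwa [Matrix.diagonal_mul, Matrix.mul_diagonal] at this
    have hf0 : f = 0 := by
      ext k l
      fin_cases k <;> fin_cases l <;>
        [ (have h := hent 0 0; simp only [Matrix.cons_val_zero] at h;
           exact cancel _ _ _ (hne' _ _ (by omega) (by omega) (by omega)) h);
          (have h := hent 0 1;
           simp only [Matrix.cons_val_zero, Matrix.cons_val_one, Matrix.head_cons] at h;
           exact cancel _ _ _ (hne' _ _ (by omega) (by omega) (by omega)) h);
          (have h := hent 1 0;
           simp only [Matrix.cons_val_zero, Matrix.cons_val_one, Matrix.head_cons] at h;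
           exact cancel _ _ _ (hne' _ _ (by omega) (by omega) (by omega)) h);
          (have h := hent 1 1;
           simp only [Matrix.cons_val_one, Matrix.head_cons] at h;
           exact cancel _ _ _ (hne' _ _ (by omega) (by omega) (by omega)) h)]
    rw [hf0] at hf
    exact zero_ne_one (isUnit_zero_iff.mp hf)
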